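/- In the space (F, ‖·‖) of Definition 6.3, the partial sum projections satisfy ‖f‖ ≥ ‖P_n f‖ + 2^{-(2n+4)}‖f − P_n f‖ for every f ∈ F and every n ∈ ℕ. -/

import Mathlib

/-- Lemma 6.7: in the space `(F, NF)` of Definition 6.3 — here `Y` stands for `ℓ²(X)`
with its canonical norm `‖·‖`, `fv i = f_{i+1}` its basis, `Fd d = span{f₁,…,f_d}`,
`Nd d = |·|_d` the chosen monotone rational norms, `P n` the partial-sum projections, and
`NF` the norm whose unit ball is the closed convex hull of the balls `B_{(F_d,|·|_d)}` —
the partial-sum projections satisfy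
`NF f ≥ NF (P_n f) + 2^{-(2n+4)}·NF (f − P_n f)` for every `f` and every `n ≥ 1`. -/
theorem stmt16 {Y : Type*} [NormedAddCommGroup Y] [NormedSpace ℝ Y] [CompleteSpace Y]
    (fv : ℕ → Y)
    (Fd : ℕ → Submodule ℝ Y)
    (hFd : ∀ d : ℕ, Fd d = Submodule.span ℝ (fv '' {i | i < d}))
    (Nd : ℕ → Y → ℝ)
    (hNdnorm : ∀ d : ℕ, (∀ y z : Y, Nd d (y + z) ≤ Nd d y + Nd d z)
      ∧ (∀ (a : ℝ) (y : Y), Nd d (a • y) = |a| * Nd d y) ∧ (∀ y : Y, 0 ≤ Nd d y))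
    (hNdest : ∀ d : ℕ, ∀ y ∈ Fd (d + 1),
      (1 - ((2 : ℝ) ^ (2 * (d + 1) + 1))⁻¹) * ‖y‖ ≤ Nd (d + 1) y
      ∧ Nd (d + 1) y ≤ (1 - ((2 : ℝ) ^ (2 * (d + 1) + 2))⁻¹) * ‖y‖)
    (P : ℕ → Y →L[ℝ] Y)
    (hPf : ∀ n i : ℕ, P n (fv i) = if i < n then fv i else 0)
    (hPrange : ∀ (n : ℕ) (y : Y), P n y ∈ Fd n)
    (hPlim : ∀ y : Y, Filter.Tendsto (fun n => P n y) Filter.atTop (nhds y))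
    (hPl2 : ∀ (n : ℕ) (y : Y), ‖P n y‖ ≤ ‖y‖)
    (hNdmono : ∀ d n : ℕ, ∀ y ∈ Fd (d + 1), Nd (d + 1) (P n y) ≤ Nd (d + 1) y)
    (hNdrat : ∀ d : ℕ, ∃ G : Finset Y,
      ({y : Y | y ∈ Fd (d + 1) ∧ Nd (d + 1) y ≤ 1} = convexHull ℝ ↑G)
      ∧ ∀ g ∈ G, ∃ q : ℕ → ℚ, g = ∑ i ∈ Finset.range (d + 1), (q i : ℝ) • fv i)
    (NF : Y → ℝ)
    (hNFadd : ∀ y z : Y, NF (y + z) ≤ NF y + NF z)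
    (hNFsmul : ∀ (a : ℝ) (y : Y), NF (a • y) = |a| * NF y)
    (hNFpos : ∀ y : Y, 0 ≤ NF y)
    (hNFball : {y : Y | NF y ≤ 1}
      = closure (convexHull ℝ (⋃ d : ℕ, {y : Y | y ∈ Fd (d + 1) ∧ Nd (d + 1) y ≤ 1}))) :
    ∀ n : ℕ, 1 ≤ n → ∀ y : Y,
      NF (P n y) + ((2 : ℝ) ^ (2 * n + 4))⁻¹ * NF (y - P n y) ≤ NF y := by
  -- generalities
  have h2j : ∀ j : ℕ, (1:ℝ) ≤ 2 ^ j := fun j => one_le_pow₀ (by norm_num)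
  have h2jpos : ∀ j : ℕ, (0:ℝ) < 2 ^ j := fun j => by positivity
  have hNF0 : NF 0 = 0 := by
    have := hNFsmul 0 0; simpa using this
  have hNFneg : ∀ z : Y, NF (-z) = NF z := by
    intro z; have := hNFsmul (-1) z; simpa using this
  -- scaling helper
  have hscale : ∀ (g : Y → ℝ), (∀ (a : ℝ) (z : Y), g (a • z) = |a| * g z) →
      ∀ (z : Y) (c : ℝ), 0 < c → g (c⁻¹ • z) ≤ 1 → g z ≤ c := by
    intro g hg z c hc h
    rw [hg, abs_of_pos (inv_pos.2 hc)] at h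
    have := mul_le_mul_of_nonneg_left h hc.le
    rwa [← mul_assoc, mul_inv_cancel₀ hc.ne', one_mul, mul_one] at this
  -- Fd monotone
  have hFdmono : ∀ a b : ℕ, a ≤ b → Fd a ≤ Fd b := by
    intro a b hab
    rw [hFd a, hFd b]
    exact Submodule.span_mono (Set.image_mono (fun i hi => lt_of_lt_of_le hi hab))
  -- set S
  set S : Set Y := ⋃ d : ℕ, {y : Y | y ∈ Fd (d + 1) ∧ Nd (d + 1) y ≤ 1} with hS
  have hmemNF : ∀ z : Y, z ∈ closure (convexHull ℝ S) → NF z ≤ 1 := by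
    intro z hz
    have : z ∈ {y : Y | NF y ≤ 1} := by rw [hNFball]; exact hz
    exact this
  -- NF ≤ Nd on Fd (d+1)
  have hC : ∀ d : ℕ, ∀ f ∈ Fd (d + 1), NF f ≤ Nd (d + 1) f := by
    intro d f hf
    refine le_of_forall_pos_le_add ?_
    intro ε hε
    set c := Nd (d + 1) f + ε with hc
    have hc0 : 0 < c := add_pos_of_nonneg_of_pos ((hNdnorm (d + 1)).2.2 f) hε
    refine hscale NF hNFsmul f c hc0 ?_
    refine hmemNF _ (subset_closure (subset_convexHull ℝ S ?_))
    refine Set.mem_iUnion.2 ⟨d, ?_, ?_⟩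
    · exact Submodule.smul_mem _ _ hf
    · rw [(hNdnorm (d + 1)).2.1, abs_of_pos (inv_pos.2 hc0)]
      have h1 : Nd (d + 1) f ≤ c := by simp [hc]; linarith
      calc c⁻¹ * Nd (d + 1) f ≤ c⁻¹ * c :=
            mul_le_mul_of_nonneg_left h1 (inv_pos.2 hc0).le
        _ = 1 := inv_mul_cancel₀ hc0.ne'
  -- NF ≤ norm
  have hball : ∀ w : Y, ‖w‖ ≤ 1 → NF w ≤ 1 := by
    intro w hw
    refine hmemNF w ?_
    refine mem_closure_of_tendsto (hPlim w) (Filter.Eventually.of_forall fun m => ?_)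
    refine subset_convexHull ℝ S (Set.mem_iUnion.2 ⟨m, ?_, ?_⟩)
    · exact hFdmono m (m + 1) (Nat.le_succ m) (hPrange m w)
    · have hm := (hNdest m (P m w) (hFdmono m (m + 1) (Nat.le_succ m) (hPrange m w))).2
      have h1 : ‖P m w‖ ≤ 1 := le_trans (hPl2 m w) hw
      have h2 : (0:ℝ) ≤ ‖P m w‖ := norm_nonneg _
      have h3 : ((2:ℝ) ^ (2 * (m + 1) + 2))⁻¹ ≤ 1 := by
        rw [inv_le_one_iff₀]; right; exact h2j _
      have h4 : (0:ℝ) < ((2:ℝ) ^ (2 * (m + 1) + 2))⁻¹ := inv_pos.2 (h2jpos _)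
      nlinarith
  have hE : ∀ z : Y, NF z ≤ ‖z‖ := by
    intro z
    refine le_of_forall_pos_le_add ?_
    intro ε hε
    set c := ‖z‖ + ε with hc
    have hc0 : 0 < c := add_pos_of_nonneg_of_pos (norm_nonneg z) hε
    refine hscale NF hNFsmul z c hc0 (hball _ ?_)
    rw [norm_smul, norm_inv, Real.norm_eq_abs, abs_of_pos hc0]
    calc c⁻¹ * ‖z‖ ≤ c⁻¹ * c := by
          refine mul_le_mul_of_nonneg_left ?_ (inv_pos.2 hc0).le
          simp [hc]; linarith
      _ = 1 := inv_mul_cancel₀ hc0.ne'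
  -- NF is 1-Lipschitz, hence continuous
  have hNFsub : ∀ a b : Y, NF a - NF b ≤ NF (a - b) := by
    intro a b
    have := hNFadd (a - b) b
    simp only [sub_add_cancel] at this
    linarith
  have hNFcont : Continuous NF := by
    refine LipschitzWith.continuous (K := 1) (LipschitzWith.of_dist_le_mul fun a b => ?_)
    rw [Real.dist_eq, dist_eq_norm, NNReal.coe_one, one_mul]
    have h1 := hNFsub a b
    have h2 := hNFsub b a
    have h3 : NF (b - a) = NF (a - b) := by rw [← hNFneg (a - b), neg_sub]
    have h4 := hE (a - b)
    rw [abs_sub_le_iff]; constructor <;> linarith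
  -- P n fixes Fd m for m ≤ n
  have hPfix : ∀ n m : ℕ, m ≤ n → ∀ f ∈ Fd m, P n f = f := by
    intro n m hm f hf
    rw [hFd m] at hf
    refine Submodule.span_induction ?_ ?_ ?_ ?_ hf
    · rintro x ⟨i, hi, rfl⟩
      rw [hPf n i, if_pos (lt_of_lt_of_le hi hm)]
    · exact map_zero _
    · intro x y _ _ hx hy; rw [map_add, hx, hy]
    · intro a x _ hx; rw [map_smul, hx]
  -- main
  intro n hn y
  set ε : ℝ := ((2:ℝ) ^ (2 * n + 4))⁻¹ with hεdef
  have hεpos : 0 < ε := inv_pos.2 (h2jpos _)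
  set Φ : Y → ℝ := fun z => NF (P n z) + ε * NF (z - P n z) with hΦdef
  have hΦpos : ∀ z, 0 ≤ Φ z := fun z =>
    add_nonneg (hNFpos _) (mul_nonneg hεpos.le (hNFpos _))
  have hΦsmul : ∀ (a : ℝ) (z : Y), Φ (a • z) = |a| * Φ z := by
    intro a z
    have h1 : P n (a • z) = a • P n z := map_smul (P n) a z
    simp only [hΦdef, h1, ← smul_sub, hNFsmul]
    ring
  have hΦadd : ∀ u v : Y, Φ (u + v) ≤ Φ u + Φ v := by
    intro u v
    have h1 : P n (u + v) = P n u + P n v := map_add (P n) u v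
    have h3 := hNFadd (P n u) (P n v)
    have h4 := hNFadd (u - P n u) (v - P n v)
    have h5 := mul_le_mul_of_nonneg_left h4 hεpos.le
    simp only [hΦdef, h1]
    have h2 : u + v - (P n u + P n v) = (u - P n u) + (v - P n v) := by abel
    rw [h2]
    linarith
  have hΦcont : Continuous Φ := by
    refine Continuous.add (hNFcont.comp (P n).continuous) ?_
    exact continuous_const.mul (hNFcont.comp (continuous_id.sub (P n).continuous))
  -- core estimate on elementary balls
  have hcore : ∀ f ∈ S, Φ f ≤ 1 := by
    rintro f hfS
    obtain ⟨d, hfd, hfN⟩ := Set.mem_iUnion.1 hfS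
    by_cases hdn : d + 1 ≤ n
    · -- P n fixes f
      have hfix : P n f = f := hPfix n (d + 1) hdn f hfd
      have : Φ f = NF f := by
        simp [hΦdef, hfix, hNF0]
      rw [this]
      exact le_trans (hC d f hfd) hfN
    · -- n ≤ d
      have hnd : n ≤ d := by omega
      obtain ⟨k, rfl⟩ : ∃ k, n = k + 1 := ⟨n - 1, by omega⟩
      set m : ℕ := 2 * k + 4 with hm
      have hPm : P (k + 1) f ∈ Fd (k + 1) := hPrange _ f
      have h1 : NF (P (k + 1) f) ≤ Nd (k + 1) (P (k + 1) f) := hC k _ hPm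
      have h2 : Nd (k + 1) (P (k + 1) f) ≤ (1 - ((2:ℝ) ^ (2 * (k + 1) + 2))⁻¹) * ‖P (k + 1) f‖ :=
        (hNdest k _ hPm).2
      have h3 : ‖P (k + 1) f‖ ≤ ‖f‖ := hPl2 _ _
      have h4 : NF (f - P (k + 1) f) ≤ ‖f - P (k + 1) f‖ := hE _
      have h5 : ‖f - P (k + 1) f‖ ≤ 2 * ‖f‖ := by
        have := norm_sub_le f (P (k + 1) f); linarith
      have h6 : (1 - ((2:ℝ) ^ (2 * (d + 1) + 1))⁻¹) * ‖f‖ ≤ Nd (d + 1) f := (hNdest d f hfd).1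
      -- exponent arithmetic
      have e0 : 2 * (k + 1) + 2 = m := by omega
      have e1 : ((2:ℝ) ^ m)⁻¹ = 2 * ((2:ℝ) ^ (m + 1))⁻¹ := by
        have h : (2:ℝ) ^ (m + 1) = 2 * 2 ^ m := by rw [pow_succ]; ring
        rw [h, mul_inv]; ring
      have e2 : 2 * ε = ((2:ℝ) ^ (m + 1))⁻¹ := by
        have hexp : 2 * (k + 1) + 4 = (m + 1) + 1 := by omega
        have h : (2:ℝ) ^ (2 * (k + 1) + 4) = 2 * 2 ^ (m + 1) := by
          rw [hexp, pow_succ]; ring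
        rw [hεdef, h, mul_inv]; ring
      have e3 : ((2:ℝ) ^ (2 * (d + 1) + 1))⁻¹ ≤ ((2:ℝ) ^ (m + 1))⁻¹ := by
        refine inv_anti₀ (h2jpos _) ?_
        exact pow_le_pow_right₀ (by norm_num) (by omega)
      rw [e0] at h2
      have hα1 : ((2:ℝ) ^ m)⁻¹ ≤ 1 := by
        rw [inv_le_one_iff₀]; right; exact h2j _
      have hf0 : (0:ℝ) ≤ ‖f‖ := norm_nonneg _
      have key : Φ f ≤ (1 - ((2:ℝ) ^ (m + 1))⁻¹) * ‖f‖ := by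
        have hA : NF (P (k + 1) f) ≤ (1 - ((2:ℝ) ^ m)⁻¹) * ‖f‖ := by
          have := mul_le_mul_of_nonneg_left h3 (by linarith : (0:ℝ) ≤ 1 - ((2:ℝ) ^ m)⁻¹)
          linarith
        have hB : ε * NF (f - P (k + 1) f) ≤ ((2:ℝ) ^ (m + 1))⁻¹ * ‖f‖ := by
          have hb1 : NF (f - P (k + 1) f) ≤ 2 * ‖f‖ := le_trans h4 h5
          have hb2 := mul_le_mul_of_nonneg_left hb1 hεpos.le
          calc ε * NF (f - P (k + 1) f) ≤ ε * (2 * ‖f‖) := hb2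
            _ = (2 * ε) * ‖f‖ := by ring
            _ = ((2:ℝ) ^ (m + 1))⁻¹ * ‖f‖ := by rw [e2]
        have hAB := add_le_add hA hB
        have hsum : (1 - ((2:ℝ) ^ m)⁻¹) * ‖f‖ + ((2:ℝ) ^ (m + 1))⁻¹ * ‖f‖
            = (1 - ((2:ℝ) ^ (m + 1))⁻¹) * ‖f‖ := by rw [e1]; ring
        have : Φ f = NF (P (k + 1) f) + ε * NF (f - P (k + 1) f) := rfl
        rw [this]
        linarith
      have key2 : (1 - ((2:ℝ) ^ (m + 1))⁻¹) * ‖f‖ ≤ Nd (d + 1) f := by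
        have := mul_le_mul_of_nonneg_right (by linarith : 1 - ((2:ℝ) ^ (m + 1))⁻¹ ≤ 1 - ((2:ℝ) ^ (2 * (d + 1) + 1))⁻¹) hf0
        linarith
      exact le_trans key (le_trans key2 hfN)
  -- extend to closed convex hull
  have hΦ1 : ∀ w : Y, NF w ≤ 1 → Φ w ≤ 1 := by
    intro w hw
    have hwmem : w ∈ closure (convexHull ℝ S) := by
      have : w ∈ {y : Y | NF y ≤ 1} := hw
      rwa [hNFball] at this
    have hconv : Convex ℝ {z : Y | Φ z ≤ 1} := by
      intro x hx z hz a b ha hb hab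
      simp only [Set.mem_setOf_eq] at hx hz ⊢
      have h1 := hΦadd (a • x) (b • z)
      rw [hΦsmul, hΦsmul, abs_of_nonneg ha, abs_of_nonneg hb] at h1
      nlinarith [mul_le_mul_of_nonneg_left hx ha, mul_le_mul_of_nonneg_left hz hb]
    have hclosed : IsClosed {z : Y | Φ z ≤ 1} := isClosed_le hΦcont continuous_const
    have hsub : closure (convexHull ℝ S) ⊆ {z : Y | Φ z ≤ 1} :=
      closure_minimal (convexHull_min hcore hconv) hclosed
    exact hsub hwmem
  -- scale
  refine le_of_forall_pos_le_add ?_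
  intro δ hδ
  set c := NF y + δ with hc
  have hc0 : 0 < c := add_pos_of_nonneg_of_pos (hNFpos y) hδ
  refine hscale Φ hΦsmul y c hc0 ?_
  refine hΦ1 _ ?_
  rw [hNFsmul, abs_of_pos (inv_pos.2 hc0)]
  calc c⁻¹ * NF y ≤ c⁻¹ * c := by
        refine mul_le_mul_of_nonneg_left ?_ (inv_pos.2 hc0).le
        simp [hc]; linarith
    _ = 1 := inv_mul_cancel₀ hc0.ne'
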